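/- Let r ≥ 1 and k ≥ 0 be integers and let F be the prim normal form map. Suppose the point (t, b, c) satisfies p_i^{(l)}(t) = 0 for every 0 ≤ i ≤ k and every 1 ≤ l ≤ r. Then t = 0, b = 0 and c = 0; moreover, for any point (t′, b′, c′) with F(t′, b′, c′) = F(t, b, c) one has (t′, b′, c′) = (t, b, c). In other words, the only Σ^{1_r}-point of the normal form F is the origin, and it is not a multiple point of F. -/
import Mathlib


open Polynomial

/-- The family of polynomials `p_0, p_1, …, p_k` of the prim normal form:
`p_0(x) = x^(r+1) + ∑_{m=1}^{r-1} b_m x^m` and, for `1 ≤ i ≤ k`,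
`p_i(x) = ∑_{m=1}^{r} c_{i,m} x^m`. -/
noncomputable def primPoly (r k : ℕ) (b : Fin (r - 1) → ℝ) (c : Fin k × Fin r → ℝ) :
    Fin (k + 1) → Polynomial ℝ :=
  Fin.cons (X ^ (r + 1) + ∑ m : Fin (r - 1), C (b m) * X ^ ((m : ℕ) + 1))
    (fun i => ∑ m : Fin r, C (c (i, m)) * X ^ ((m : ℕ) + 1))

/-- The prim normal form map `F(t, b, c) = ((p_0(t), …, p_k(t)), b, c)`. -/
noncomputable def primNormalForm (r k : ℕ) :
    ℝ × (Fin (r - 1) → ℝ) × (Fin k × Fin r → ℝ) →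
      (Fin (k + 1) → ℝ) × (Fin (r - 1) → ℝ) × (Fin k × Fin r → ℝ) :=
  fun x => (fun i => (primPoly r k x.2.1 x.2.2 i).eval x.1, x.2.1, x.2.2)

lemma iterDerivAdd {R : Type*} [CommSemiring R] (l : ℕ) (p q : R[X]) :
    derivative^[l] (p + q) = derivative^[l] p + derivative^[l] q := by
  simp_rw [← Module.End.pow_apply, map_add]

lemma evalIter (a t : ℝ) (n l : ℕ) :
    (derivative^[l] (C a * X ^ n)).eval t = a * (n.descFactorial l : ℝ) * t ^ (n - l) := by
  rw [Polynomial.iterate_derivative_C_mul, Polynomial.iterate_derivative_X_pow_eq_C_mul]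
  simp [mul_assoc]

/-- If `(t, b, c)` is a `Σ^{1_r}`-point of the prim normal form `F`
(i.e. `p_i^{(l)}(t) = 0` for all `0 ≤ i ≤ k` and `1 ≤ l ≤ r`), then
`(t, b, c) = (0, 0, 0)` and it is not a multiple point of `F`. -/
theorem stmt6 (r k : ℕ) (hr : 1 ≤ r) (t : ℝ) (b : Fin (r - 1) → ℝ)
    (c : Fin k × Fin r → ℝ)
    (hsing : ∀ i : Fin (k + 1), ∀ l : ℕ, 1 ≤ l → l ≤ r →
      (derivative^[l] (primPoly r k b c i)).eval t = 0) :
    t = 0 ∧ b = 0 ∧ c = 0 ∧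
    ∀ (t' : ℝ) (b' : Fin (r - 1) → ℝ) (c' : Fin k × Fin r → ℝ),
      primNormalForm r k (t', b', c') = primNormalForm r k (t, b, c) →
      (t', b', c') = (t, b, c) := by
  have hp0 : ∀ l : ℕ, (derivative^[l] (primPoly r k b c 0)).eval t
      = ((r+1).descFactorial l : ℝ) * t ^ (r+1-l)
        + ∑ m : Fin (r-1), b m * (((m:ℕ)+1).descFactorial l : ℝ) * t ^ ((m:ℕ)+1-l) := by
    intro l
    simp only [primPoly, Fin.cons_zero]
    rw [iterDerivAdd, Polynomial.iterate_derivative_sum, eval_add, eval_finset_sum]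
    congr 1
    · have := evalIter 1 t (r+1) l; simpa using this
    · exact Finset.sum_congr rfl fun m _ => evalIter _ _ _ _
  have hpi : ∀ (i : Fin k) (l : ℕ), (derivative^[l] (primPoly r k b c i.succ)).eval t
      = ∑ m : Fin r, c (i, m) * (((m:ℕ)+1).descFactorial l : ℝ) * t ^ ((m:ℕ)+1-l) := by
    intro i l
    simp only [primPoly, Fin.cons_succ]
    rw [Polynomial.iterate_derivative_sum, eval_finset_sum]
    exact Finset.sum_congr rfl fun m _ => evalIter _ _ _ _
  have ht : t = 0 := by
    have h := hsing 0 r hr le_rfl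
    rw [hp0 r] at h
    have hz : ∑ m : Fin (r-1), b m * (((m:ℕ)+1).descFactorial r : ℝ) * t ^ ((m:ℕ)+1-r) = 0 :=
      Finset.sum_eq_zero fun m _ => by
        have : ((m:ℕ)+1).descFactorial r = 0 :=
          Nat.descFactorial_eq_zero_iff_lt.mpr (by have := m.2; omega)
        rw [this]; push_cast; ring
    rw [hz, add_zero, show r+1-r = 1 by omega, pow_one] at h
    have hd : ((r+1).descFactorial r : ℝ) ≠ 0 :=
      Nat.cast_ne_zero.mpr fun hz => absurd (Nat.descFactorial_eq_zero_iff_lt.mp hz) (by omega)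
    rcases mul_eq_zero.mp h with h' | h'
    · exact absurd h' hd
    · exact h'
  subst ht
  have hb : b = 0 := by
    funext m
    have h := hsing 0 ((m:ℕ)+1) (by omega) (by have := m.2; omega)
    rw [hp0] at h
    have h1 : ((r+1).descFactorial ((m:ℕ)+1) : ℝ) * (0:ℝ) ^ (r+1-((m:ℕ)+1)) = 0 := by
      rw [zero_pow (by have := m.2; omega)]; ring
    have h2 : ∑ j : Fin (r-1), b j * (((j:ℕ)+1).descFactorial ((m:ℕ)+1) : ℝ)
          * (0:ℝ) ^ ((j:ℕ)+1-((m:ℕ)+1))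
        = b m * (((m:ℕ)+1).descFactorial ((m:ℕ)+1) : ℝ) := by
      rw [Finset.sum_eq_single m]
      · rw [show (m:ℕ)+1-((m:ℕ)+1) = 0 by omega, pow_zero, mul_one]
      · intro j _ hj
        have hjm : (j:ℕ) ≠ (m:ℕ) := fun hh => hj (Fin.ext hh)
        rcases lt_or_gt_of_ne hjm with hlt | hgt
        · have : ((j:ℕ)+1).descFactorial ((m:ℕ)+1) = 0 :=
            Nat.descFactorial_eq_zero_iff_lt.mpr (by omega)
          rw [this]; push_cast; ring
        · rw [zero_pow (by omega)]; ring
      · intro hm; exact absurd (Finset.mem_univ m) hm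
    rw [h1, h2, zero_add] at h
    have hd : ((((m:ℕ)+1).descFactorial ((m:ℕ)+1)) : ℝ) ≠ 0 :=
      Nat.cast_ne_zero.mpr fun hz => absurd (Nat.descFactorial_eq_zero_iff_lt.mp hz) (by omega)
    show b m = 0
    rcases mul_eq_zero.mp h with h' | h'
    · exact h'
    · exact absurd h' hd
  have hc : c = 0 := by
    funext p
    obtain ⟨i, m⟩ := p
    have h := hsing i.succ ((m:ℕ)+1) (by omega) (by have := m.2; omega)
    rw [hpi] at h
    have h2 : ∑ j : Fin r, c (i, j) * (((j:ℕ)+1).descFactorial ((m:ℕ)+1) : ℝ)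
          * (0:ℝ) ^ ((j:ℕ)+1-((m:ℕ)+1))
        = c (i, m) * (((m:ℕ)+1).descFactorial ((m:ℕ)+1) : ℝ) := by
      rw [Finset.sum_eq_single m]
      · rw [show (m:ℕ)+1-((m:ℕ)+1) = 0 by omega, pow_zero, mul_one]
      · intro j _ hj
        have hjm : (j:ℕ) ≠ (m:ℕ) := fun hh => hj (Fin.ext hh)
        rcases lt_or_gt_of_ne hjm with hlt | hgt
        · have : ((j:ℕ)+1).descFactorial ((m:ℕ)+1) = 0 :=
            Nat.descFactorial_eq_zero_iff_lt.mpr (by omega)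
          rw [this]; push_cast; ring
        · rw [zero_pow (by omega)]; ring
      · intro hm; exact absurd (Finset.mem_univ m) hm
    rw [h2] at h
    have hd : ((((m:ℕ)+1).descFactorial ((m:ℕ)+1)) : ℝ) ≠ 0 :=
      Nat.cast_ne_zero.mpr fun hz => absurd (Nat.descFactorial_eq_zero_iff_lt.mp hz) (by omega)
    show c (i, m) = 0
    rcases mul_eq_zero.mp h with h' | h'
    · exact h'
    · exact absurd h' hd
  refine ⟨rfl, hb, hc, ?_⟩
  subst hb hc
  intro t' b' c' h
  simp only [primNormalForm, Prod.mk.injEq] at h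
  obtain ⟨h1, h2, h3⟩ := h
  subst h2 h3
  have h0 := congrFun h1 0
  simp only [primPoly, Fin.cons_zero, Pi.zero_apply, map_zero, zero_mul,
    Finset.sum_const_zero, add_zero, eval_pow, eval_X] at h0
  have ht' : t' = 0 := by
    have : t' ^ (r+1) = 0 := by
      rw [h0, zero_pow (by omega)]
    exact pow_eq_zero_iff (by omega) |>.mp this
  simp [ht']
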